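/- Let [a₁b₁] and [a₂b₂] be two segments of length 2l in the Euclidean plane ℝ², let mᵢ be the midpoint of [aᵢbᵢ], and assume m₁ ≠ m₂ and that a₁ and a₂ lie in the same closed half-plane bounded by the line through m₁ and m₂. Let αᵢ denote the angle between the vector from m₁ to m₂ and the vector from aᵢ to bᵢ, and set δ = α₂ − α₁. If the two segments are disjoint, then |sin δ| < dist(m₁, m₂)/l. -/

import Mathlib

open RealInnerProductSpace


/-- Second part of Lemma 1 (Lemma `L_ap`) of "Polyhedra with simple dense
geodesics": if two segments of length `2l` in the Euclidean plane, with
distinct midpoints `m₁ ≠ m₂` and with `a₁`, `a₂` in the same closed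
half-plane bounded by the line through `m₁` and `m₂`, are disjoint, then
`|sin δ| < dist m₁ m₂ / l`. -/
theorem sin_lt_of_segments_disjoint
    (l : ℝ) (hl : 0 < l)
    (a₁ b₁ a₂ b₂ m₁ m₂ : EuclideanSpace ℝ (Fin 2))
    (hm₁ : m₁ = midpoint ℝ a₁ b₁) (hm₂ : m₂ = midpoint ℝ a₂ b₂)
    (hlen₁ : dist a₁ b₁ = 2 * l) (hlen₂ : dist a₂ b₂ = 2 * l)
    (hm : m₁ ≠ m₂)
    (hhalf : ∃ f : EuclideanSpace ℝ (Fin 2) →L[ℝ] ℝ,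
      f ≠ 0 ∧ f (m₂ - m₁) = 0 ∧ 0 ≤ f (a₁ - m₁) ∧ 0 ≤ f (a₂ - m₁))
    (α₁ α₂ δ : ℝ)
    (hα₁ : α₁ = InnerProductGeometry.angle (m₂ - m₁) (b₁ - a₁))
    (hα₂ : α₂ = InnerProductGeometry.angle (m₂ - m₁) (b₂ - a₂))
    (hδ : δ = α₂ - α₁)
    (hdisj : segment ℝ a₁ b₁ ∩ segment ℝ a₂ b₂ = ∅) :
    |Real.sin δ| < dist m₁ m₂ / l := by
  obtain ⟨f, hf0, hfe, hfa₁, hfa₂⟩ := hhalf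
  set e : EuclideanSpace ℝ (Fin 2) := m₂ - m₁ with he
  set w₁ : EuclideanSpace ℝ (Fin 2) := b₁ - a₁ with hw₁
  set w₂ : EuclideanSpace ℝ (Fin 2) := b₂ - a₂ with hw₂
  set d : ℝ := dist m₁ m₂ with hd
  have hd0 : 0 < d := dist_pos.mpr hm
  have hde : ‖e‖ = d := by rw [he, hd, dist_eq_norm, norm_sub_rev]
  have hnw₁ : ‖w₁‖ = 2 * l := by rw [hw₁, ← dist_eq_norm, dist_comm, hlen₁]
  have hnw₂ : ‖w₂‖ = 2 * l := by rw [hw₂, ← dist_eq_norm, dist_comm, hlen₂]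
  have hinner : ∀ x y : EuclideanSpace ℝ (Fin 2), ⟪x, y⟫ = x 0 * y 0 + x 1 * y 1 := by
    intro x y; simp [PiLp.inner_apply, Fin.sum_univ_two, RCLike.inner_apply]; ring
  set S₁ : ℝ := e 0 * w₁ 1 - e 1 * w₁ 0 with hS₁
  set S₂ : ℝ := e 0 * w₂ 1 - e 1 * w₂ 0 with hS₂
  set C₁ : ℝ := e 0 * w₁ 0 + e 1 * w₁ 1 with hC₁
  set C₂ : ℝ := e 0 * w₂ 0 + e 1 * w₂ 1 with hC₂
  set K : ℝ := w₁ 0 * w₂ 1 - w₁ 1 * w₂ 0 with hK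
  clear_value e w₁ w₂ d S₁ S₂ C₁ C₂ K
  have hdl : (0:ℝ) < d * (2 * l) := by positivity
  have hd2 : d ^ 2 = e 0 ^ 2 + e 1 ^ 2 := by
    rw [← hde, ← real_inner_self_eq_norm_sq, hinner]; ring
  have hcos₁ : Real.cos α₁ * (d * (2 * l)) = C₁ := by
    rw [hα₁, InnerProductGeometry.cos_angle, hde, hnw₁, hinner, hC₁]
    field_simp
  have hcos₂ : Real.cos α₂ * (d * (2 * l)) = C₂ := by
    rw [hα₂, InnerProductGeometry.cos_angle, hde, hnw₂, hinner, hC₂]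
    field_simp
  have hsin : ∀ (w : EuclideanSpace ℝ (Fin 2)),
      Real.sin (InnerProductGeometry.angle e w) * (d * ‖w‖) =
        |e 0 * w 1 - e 1 * w 0| := by
    intro w
    have h := InnerProductGeometry.sin_angle_mul_norm_mul_norm e w
    rw [hde] at h
    rw [h, hinner, hinner, hinner]
    rw [show (e 0 * e 0 + e 1 * e 1) * (w 0 * w 0 + w 1 * w 1) -
        (e 0 * w 0 + e 1 * w 1) * (e 0 * w 0 + e 1 * w 1)
        = (e 0 * w 1 - e 1 * w 0) ^ 2 by ring, Real.sqrt_sq_eq_abs]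
  have hsin₁ : Real.sin α₁ * (d * (2 * l)) = |S₁| := by
    rw [hα₁, ← hnw₁, hS₁]; exact hsin w₁
  have hsin₂ : Real.sin α₂ * (d * (2 * l)) = |S₂| := by
    rw [hα₂, ← hnw₂, hS₂]; exact hsin w₂
  have hsinn₁ : 0 ≤ Real.sin α₁ := by
    rw [hα₁]
    exact Real.sin_nonneg_of_nonneg_of_le_pi (InnerProductGeometry.angle_nonneg _ _)
      (InnerProductGeometry.angle_le_pi _ _)
  have hsinn₂ : 0 ≤ Real.sin α₂ := by
    rw [hα₂]
    exact Real.sin_nonneg_of_nonneg_of_le_pi (InnerProductGeometry.angle_nonneg _ _)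
      (InnerProductGeometry.angle_le_pi _ _)
  have hmid : ∀ x y : EuclideanSpace ℝ (Fin 2),
      midpoint ℝ x y = ((2:ℝ)⁻¹) • (x + y) := by
    intro x y; rw [midpoint_eq_smul_add, invOf_eq_inv]
  -- half-plane condition forces S₁ and S₂ to have the same sign
  have hsign : 0 ≤ S₁ * S₂ := by
    set c0 : ℝ := f (EuclideanSpace.single 0 1) with hc0
    set c1 : ℝ := f (EuclideanSpace.single 1 1) with hc1
    clear_value c0 c1
    have hfx : ∀ x : EuclideanSpace ℝ (Fin 2), f x = c0 * x 0 + c1 * x 1 := by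
      intro x
      have hx : x = x 0 • EuclideanSpace.single 0 (1:ℝ)
          + x 1 • EuclideanSpace.single 1 (1:ℝ) := by
        refine PiLp.ext fun i => ?_
        fin_cases i <;> simp
      conv_lhs => rw [hx]
      rw [map_add, map_smul, map_smul, smul_eq_mul, smul_eq_mul, ← hc0, ← hc1]
      ring
    have hcc : 0 < c0 ^ 2 + c1 ^ 2 := by
      rcases eq_or_lt_of_le (by positivity : (0:ℝ) ≤ c0 ^ 2 + c1 ^ 2) with h | h
      · exfalso
        apply hf0
        obtain ⟨h0', h1'⟩ :=
          (add_eq_zero_iff_of_nonneg (sq_nonneg c0) (sq_nonneg c1)).mp h.symm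
        have h00 : c0 = 0 := sq_eq_zero_iff.mp h0'
        have h01 : c1 = 0 := sq_eq_zero_iff.mp h1'
        ext x
        rw [hfx x, h00, h01]; simp
      · exact h
    have hE : c0 * e 0 + c1 * e 1 = 0 := by rw [← hfx]; exact hfe
    have hF₁ : c0 * w₁ 0 + c1 * w₁ 1 ≤ 0 := by
      have h1 : a₁ - m₁ = -((2:ℝ)⁻¹ • w₁) := by
        rw [hm₁, hw₁, hmid]; module
      rw [hfx] at hfa₁
      have h20 : (a₁ - m₁) 0 = -((2:ℝ)⁻¹ * w₁ 0) := by rw [h1]; simp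
      have h21 : (a₁ - m₁) 1 = -((2:ℝ)⁻¹ * w₁ 1) := by rw [h1]; simp
      rw [h20, h21] at hfa₁
      linarith only [hfa₁]
    have hF₂ : c0 * w₂ 0 + c1 * w₂ 1 ≤ 0 := by
      have h1 : a₂ - m₁ = -((2:ℝ)⁻¹ • w₂) + e := by
        rw [he, hm₂, hw₂, hmid]; module
      rw [hfx] at hfa₂
      have h20 : (a₂ - m₁) 0 = -((2:ℝ)⁻¹ * w₂ 0) + e 0 := by rw [h1]; simp
      have h21 : (a₂ - m₁) 1 = -((2:ℝ)⁻¹ * w₂ 1) + e 1 := by rw [h1]; simp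
      rw [h20, h21] at hfa₂
      linarith only [hfa₂, hE]
    have key : (c0 ^ 2 + c1 ^ 2) * (S₁ * S₂)
        = (e 0 ^ 2 + e 1 ^ 2) * ((c0 * w₁ 0 + c1 * w₁ 1) * (c0 * w₂ 0 + c1 * w₂ 1)) := by
      rw [hS₁, hS₂]
      linear_combination ((w₁ 0 * w₂ 0 + w₁ 1 * w₂ 1) * (c0 * e 0 + c1 * e 1)
        - e 0 * ((c0 * w₁ 0 + c1 * w₁ 1) * w₂ 0 + (c0 * w₂ 0 + c1 * w₂ 1) * w₁ 0)
        - e 1 * ((c0 * w₁ 0 + c1 * w₁ 1) * w₂ 1 + (c0 * w₂ 0 + c1 * w₂ 1) * w₁ 1)) * hE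
    have hrhs : 0 ≤ (e 0 ^ 2 + e 1 ^ 2)
        * ((c0 * w₁ 0 + c1 * w₁ 1) * (c0 * w₂ 0 + c1 * w₂ 1)) :=
      mul_nonneg (by positivity) (mul_nonneg_iff.mpr (Or.inr ⟨hF₁, hF₂⟩))
    by_contra hneg
    push_neg at hneg
    have hprod := mul_pos hcc (neg_pos.mpr hneg)
    linarith only [key, hrhs, hprod]
  -- main identity: |sin δ| * (4 l²) = |K|
  have hsinδ : Real.sin δ = Real.sin α₂ * Real.cos α₁ - Real.cos α₂ * Real.sin α₁ := by
    rw [hδ, Real.sin_sub]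
  have hmain : Real.sin δ * (d * (2 * l)) ^ 2 = |S₂| * C₁ - C₂ * |S₁| := by
    rw [hsinδ]
    have h : (Real.sin α₂ * Real.cos α₁ - Real.cos α₂ * Real.sin α₁) * (d * (2 * l)) ^ 2
        = (Real.sin α₂ * (d * (2 * l))) * (Real.cos α₁ * (d * (2 * l)))
          - (Real.cos α₂ * (d * (2 * l))) * (Real.sin α₁ * (d * (2 * l))) := by ring
    rw [h, hsin₁, hsin₂, hcos₁, hcos₂]
  have hident : S₂ * C₁ - C₂ * S₁ = (e 0 ^ 2 + e 1 ^ 2) * K := by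
    rw [hS₁, hS₂, hC₁, hC₂, hK]; ring
  have habs : |Real.sin δ| * (4 * l ^ 2) = |K| := by
    rcases mul_nonneg_iff.mp hsign with ⟨h1, h2⟩ | ⟨h1, h2⟩
    · have h4 : Real.sin δ * (4 * l ^ 2) = K := by
        have h5 : (Real.sin δ * (4 * l ^ 2)) * d ^ 2 = K * d ^ 2 := by
          calc (Real.sin δ * (4 * l ^ 2)) * d ^ 2
              = Real.sin δ * (d * (2 * l)) ^ 2 := by ring
            _ = |S₂| * C₁ - C₂ * |S₁| := hmain
            _ = S₂ * C₁ - C₂ * S₁ := by rw [abs_of_nonneg h1, abs_of_nonneg h2]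
            _ = (e 0 ^ 2 + e 1 ^ 2) * K := hident
            _ = K * d ^ 2 := by rw [← hd2]; ring
        exact mul_right_cancel₀ (by positivity) h5
      rw [← h4, abs_mul, abs_of_nonneg (by positivity : (0:ℝ) ≤ 4 * l ^ 2)]
    · have h4 : Real.sin δ * (4 * l ^ 2) = -K := by
        have h5 : (Real.sin δ * (4 * l ^ 2)) * d ^ 2 = -K * d ^ 2 := by
          calc (Real.sin δ * (4 * l ^ 2)) * d ^ 2
              = Real.sin δ * (d * (2 * l)) ^ 2 := by ring
            _ = |S₂| * C₁ - C₂ * |S₁| := hmain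
            _ = -(S₂ * C₁ - C₂ * S₁) := by rw [abs_of_nonpos h1, abs_of_nonpos h2]; ring
            _ = -((e 0 ^ 2 + e 1 ^ 2) * K) := by rw [hident]
            _ = -K * d ^ 2 := by rw [← hd2]; ring
        exact mul_right_cancel₀ (by positivity) h5
      rw [← abs_neg K, ← h4, abs_mul, abs_of_nonneg (by positivity : (0:ℝ) ≤ 4 * l ^ 2)]
  -- contradiction setup
  by_contra hcon
  push_neg at hcon
  have hcon' : d ≤ l * |Real.sin δ| := by
    rw [div_le_iff₀ hl] at hcon; linarith only [hcon]
  have hKlb : 4 * l * d ≤ |K| := by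
    have h6 := mul_le_mul_of_nonneg_left hcon' (by positivity : (0:ℝ) ≤ 4 * l)
    linarith only [habs, h6]
  have hKpos : (0:ℝ) < |K| := lt_of_lt_of_le (by positivity) hKlb
  have hKne : K ≠ 0 := fun h => by rw [h, abs_zero] at hKpos; exact lt_irrefl 0 hKpos
  have hS₂b : 2 * |S₂| ≤ |K| := by
    have h7 := mul_le_mul_of_nonneg_right (Real.sin_le_one α₂) (le_of_lt hdl)
    rw [hsin₂] at h7
    linarith only [h7, hKlb]
  have hS₁b : 2 * |S₁| ≤ |K| := by
    have h7 := mul_le_mul_of_nonneg_right (Real.sin_le_one α₁) (le_of_lt hdl)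
    rw [hsin₁] at h7
    linarith only [h7, hKlb]
  -- the intersection point
  have hq₂ : |S₂ / K| ≤ 1 / 2 := by
    rw [abs_div, div_le_iff₀ (abs_pos.mpr hKne)]; linarith
  have hq₁ : |S₁ / K| ≤ 1 / 2 := by
    rw [abs_div, div_le_iff₀ (abs_pos.mpr hKne)]; linarith
  set p : EuclideanSpace ℝ (Fin 2) := m₁ + (S₂ / K) • w₁ with hp
  clear_value p
  have hp₁ : p ∈ segment ℝ a₁ b₁ := by
    rw [segment_eq_image']
    refine ⟨1 / 2 + S₂ / K, ?_, ?_⟩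
    · rw [Set.mem_Icc]
      rw [abs_le] at hq₂
      constructor <;> linarith [hq₂.1, hq₂.2]
    · show a₁ + (1 / 2 + S₂ / K) • (b₁ - a₁) = p
      rw [hp, hm₁, hw₁, hmid]; module
  have hbridge : p = m₂ + (S₁ / K) • w₂ := by
    have hei : ∀ j, e j = m₂ j - m₁ j := by intro j; rw [he]; simp
    have hb : ∀ i : Fin 2, (S₂ * w₁ i - S₁ * w₂ i = K * e i) →
        (m₁ + (S₂ / K) • w₁) i = (m₂ + (S₁ / K) • w₂) i := by
      intro i hcomp
      have happ : (m₁ + (S₂ / K) • w₁) i = m₁ i + S₂ / K * w₁ i := by simp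
      have happ' : (m₂ + (S₁ / K) • w₂) i = m₂ i + S₁ / K * w₂ i := by simp
      have hm₂i : m₂ i = m₁ i + e i := by rw [hei]; ring
      rw [happ, happ', hm₂i]
      field_simp
      linear_combination hcomp
    rw [hp]
    refine PiLp.ext fun i => ?_
    fin_cases i
    · exact hb 0 (by rw [hS₁, hS₂, hK]; simp only [hei]; ring)
    · exact hb 1 (by rw [hS₁, hS₂, hK]; simp only [hei]; ring)
  have hp₂ : p ∈ segment ℝ a₂ b₂ := by
    rw [segment_eq_image']
    refine ⟨1 / 2 + S₁ / K, ?_, ?_⟩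
    · rw [Set.mem_Icc]
      rw [abs_le] at hq₁
      constructor <;> linarith [hq₁.1, hq₁.2]
    · show a₂ + (1 / 2 + S₁ / K) • (b₂ - a₂) = p
      rw [hbridge, hm₂, hw₂, hmid]; module
  have hmem : p ∈ segment ℝ a₁ b₁ ∩ segment ℝ a₂ b₂ := ⟨hp₁, hp₂⟩
  rw [hdisj] at hmem
  exact hmem
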